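/- In a free group, two cyclically reduced words are conjugate if and only if one is a cyclic permutation (cyclic rotation) of the other. -/

import Mathlib

/-- An element of a free group is cyclically reduced if the first letter of its
reduced word is not the inverse of the last letter. -/
def CyclicallyReduced {α : Type*} [DecidableEq α] (x : FreeGroup α) : Prop :=
  ∀ f l : α × Bool, x.toWord.head? = some f → x.toWord.getLast? = some l →
    f ≠ (l.1, !l.2)

section Helpers

variable {α : Type*} [DecidableEq α]

/-- The "no cancellation" relation between adjacent letters. -/
def RW : (α × Bool) → (α × Bool) → Prop := fun a b => b ≠ (a.1, !a.2)

omit [DecidableEq α] in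
lemma rw_iff (a b : α × Bool) : RW a b ↔ ¬(b.1 = a.1 ∧ b.2 = !a.2) := by
  constructor
  · rintro h ⟨h1, h2⟩; exact h (Prod.ext h1 h2)
  · intro h hb; exact h ⟨by rw [hb], by rw [hb]⟩

lemma chain_reduce (L : List (α × Bool)) : List.Chain' RW (FreeGroup.reduce L) := by
  induction L with
  | nil => exact List.IsChain.nil
  | cons a L ih =>
    rw [FreeGroup.reduce.cons]
    cases h : FreeGroup.reduce L with
    | nil => exact List.IsChain.singleton a
    | cons b t =>
      rw [h] at ih
      change List.Chain' RW (if a.1 = b.1 ∧ a.2 = !b.2 then t else a :: b :: t)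
      by_cases hc : a.1 = b.1 ∧ a.2 = !b.2
      · rw [if_pos hc]; exact ih.tail
      · rw [if_neg hc]
        refine List.IsChain.cons_cons ?_ ih
        rw [rw_iff]
        rintro ⟨h1, h2⟩
        exact hc ⟨h1.symm, by cases a.2 <;> cases b.2 <;> simp_all⟩

lemma reduce_eq_self (L : List (α × Bool)) (h : List.Chain' RW L) :
    FreeGroup.reduce L = L := by
  induction L with
  | nil => rfl
  | cons a L ih =>
    rw [FreeGroup.reduce.cons, ih h.tail]
    cases L with
    | nil => rfl
    | cons b t =>
      have hab : RW a b := (List.isChain_cons_cons.mp h).1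
      rw [rw_iff] at hab
      change (if a.1 = b.1 ∧ a.2 = !b.2 then t else a :: b :: t) = _
      rw [if_neg (fun hc : a.1 = b.1 ∧ a.2 = !b.2 =>
        hab ⟨hc.1.symm, by cases a.2 <;> cases b.2 <;> simp_all⟩)]

lemma toWord_mk_chain {L : List (α × Bool)} (h : List.Chain' RW L) :
    (FreeGroup.mk L).toWord = L := by
  rw [FreeGroup.toWord_mk, reduce_eq_self L h]

lemma chain_toWord (x : FreeGroup α) : List.Chain' RW x.toWord := by
  rw [← FreeGroup.reduce_toWord]; exact chain_reduce _

lemma chain_invRev {L : List (α × Bool)} (h : List.Chain' RW L) :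
    List.Chain' RW (FreeGroup.invRev L) := by
  have : FreeGroup.reduce (FreeGroup.invRev L) = FreeGroup.invRev L := by
    rw [FreeGroup.reduce_invRev, reduce_eq_self L h]
  rw [← this]; exact chain_reduce _

lemma cyclicallyReduced_mk {L : List (α × Bool)} (hc : List.Chain' RW L)
    (h : ∀ f l : α × Bool, L.head? = some f → L.getLast? = some l → f ≠ (l.1, !l.2)) :
    CyclicallyReduced (FreeGroup.mk L) := by
  intro f l hf hl
  rw [toWord_mk_chain hc] at hf hl
  exact h f l hf hl

lemma key : ∀ (n : ℕ) (g x : FreeGroup α), g.toWord.length ≤ n →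
    CyclicallyReduced x → CyclicallyReduced (g⁻¹ * x * g) →
    ∃ k : ℕ, (g⁻¹ * x * g).toWord = x.toWord.rotate k := by
  intro n
  induction n with
  | zero =>
    intro g x hg _ _
    have : g = 1 := FreeGroup.toWord_eq_nil_iff.mp (List.length_eq_zero_iff.mp (Nat.le_zero.mp hg))
    subst this
    exact ⟨0, by simp⟩
  | succ n ih =>
    intro g x hg hx hy
    cases hG : g.toWord with
    | nil =>
      have : g = 1 := FreeGroup.toWord_eq_nil_iff.mp hG
      subst this
      exact ⟨0, by simp⟩
    | cons z w =>
      cases hX : x.toWord with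
      | nil =>
        have : x = 1 := FreeGroup.toWord_eq_nil_iff.mp hX
        subst this
        exact ⟨0, by simp⟩
      | cons u us =>
        have hXc : List.Chain' RW (u :: us) := hX ▸ chain_toWord x
        have hGc : List.Chain' RW (z :: w) := hG ▸ chain_toWord g
        have hxe : x = FreeGroup.mk (u :: us) := by rw [← hX, FreeGroup.mk_toWord]
        obtain ⟨l, hl⟩ : ∃ l, (u :: us).getLast? = some l :=
          ⟨_, List.getLast?_eq_getLast (List.cons_ne_nil u us)⟩
        have hRu : u ≠ (l.1, !l.2) := hx u l (by rw [hX]; rfl) (by rw [hX]; exact hl)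
        set g' : FreeGroup α := FreeGroup.mk w with hg'
        have hw : g'.toWord = w := toWord_mk_chain hGc.tail
        have hgw : g = FreeGroup.mk [z] * g' := by
          rw [hg', FreeGroup.mul_mk, List.singleton_append, ← hG, FreeGroup.mk_toWord]
        have hlen : g'.toWord.length ≤ n := by
          rw [hw]
          have h2 := hg
          rw [hG, List.length_cons] at h2
          omega
        suffices h : ∃ (j : ℕ) (L' : List (α × Bool)), List.Chain' RW L' ∧
            (∀ f lst : α × Bool, L'.head? = some f → L'.getLast? = some lst →
              f ≠ (lst.1, !lst.2)) ∧
            ((FreeGroup.mk [z])⁻¹ * x * FreeGroup.mk [z] = FreeGroup.mk L') ∧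
            L' = (u :: us).rotate j by
          obtain ⟨j, L', hchain, hcyc, hcx, hrot⟩ := h
          have hx'w : (FreeGroup.mk L').toWord = L' := toWord_mk_chain hchain
          have hx'c : CyclicallyReduced (FreeGroup.mk L') := cyclicallyReduced_mk hchain hcyc
          have hconj : g⁻¹ * x * g = g'⁻¹ * FreeGroup.mk L' * g' := by
            rw [hgw, ← hcx]; group
          obtain ⟨k, hk⟩ := ih g' (FreeGroup.mk L') hlen hx'c (by rw [← hconj]; exact hy)
          refine ⟨j + k, ?_⟩
          rw [hconj, hk, hx'w, hrot, List.rotate_rotate]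
        by_cases hz1 : z = u
        · -- cancellation on the left: rotate by one
          refine ⟨1, us ++ [u], ?_, ?_, ?_, ?_⟩
          · refine List.isChain_append.mpr ⟨hXc.tail, List.isChain_singleton u, ?_⟩
            intro a ha b hb
            simp only [List.head?_cons, Option.mem_def, Option.some.injEq] at hb
            subst hb
            cases us with
            | nil => simp at ha
            | cons v vs =>
              rw [List.getLast?_cons_cons] at hl
              rw [Option.mem_def, hl] at ha
              injection ha with ha
              subst ha
              exact hRu
          · intro f lst hf hlst
            rw [List.getLast?_concat] at hlst
            injection hlst with hlst
            subst hlst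
            cases us with
            | nil =>
              rw [List.nil_append, List.head?_cons] at hf
              injection hf with hf
              subst hf
              intro hq
              have := congrArg Prod.snd hq
              simp at this
            | cons v vs =>
              rw [List.cons_append, List.head?_cons] at hf
              injection hf with hf
              subst hf
              exact (List.isChain_cons_cons.mp hXc).1
          · rw [hz1]
            have hx2 : x = FreeGroup.mk [u] * FreeGroup.mk us := by
              rw [FreeGroup.mul_mk]; exact hxe
            have hx3 : FreeGroup.mk (us ++ [u]) = FreeGroup.mk us * FreeGroup.mk [u] := by
              rw [FreeGroup.mul_mk]
            rw [hx2, hx3]; group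
          · have := List.rotate_cons_succ us u 0
            simpa using this.symm
        · by_cases hz2 : z = (l.1, !l.2)
          · -- cancellation on the right: rotate backwards
            obtain ⟨F, hXsplit⟩ : ∃ F, F ++ [l] = u :: us :=
              ⟨(u :: us).dropLast, List.dropLast_append_getLast? l hl⟩
            have hXc' : List.Chain' RW (F ++ [l]) := by rw [hXsplit]; exact hXc
            have hsp := List.isChain_append.mp hXc'
            have hFhead : ∀ b, F.head? = some b → b = u := by
              intro b hb
              cases F with
              | nil => simp at hb
              | cons p t =>
                rw [List.cons_append] at hXsplit
                injection hXsplit with h1 h2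
                rw [List.head?_cons] at hb
                injection hb with hb
                rw [← hb, h1]
            refine ⟨F.length, l :: F, ?_, ?_, ?_, ?_⟩
            · show List.Chain' RW ([l] ++ F)
              refine List.isChain_append.mpr ⟨List.isChain_singleton l, hsp.1, ?_⟩
              intro a ha b hb
              simp only [List.getLast?_singleton, Option.mem_def, Option.some.injEq] at ha
              subst ha
              rw [Option.mem_def] at hb
              rw [hFhead b hb]
              exact hRu
            · intro f lst hf hlst
              rw [List.head?_cons] at hf
              injection hf with hf
              subst hf
              cases F with
              | nil =>
                simp only [List.getLast?_singleton, Option.some.injEq] at hlst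
                subst hlst
                intro hq
                have := congrArg Prod.snd hq
                simp at this
              | cons p t =>
                rw [List.getLast?_cons_cons] at hlst
                have := hsp.2.2 lst (by rw [Option.mem_def]; exact hlst) l
                  (by rw [Option.mem_def, List.head?_cons])
                exact this
            · have hz' : FreeGroup.mk [z] = (FreeGroup.mk [l])⁻¹ := by
                rw [FreeGroup.inv_mk]
                congr 1
                simp [FreeGroup.invRev, hz2]
              have hx2 : x = FreeGroup.mk F * FreeGroup.mk [l] := by
                rw [FreeGroup.mul_mk, hXsplit]; exact hxe
              have hx3 : FreeGroup.mk (l :: F) = FreeGroup.mk [l] * FreeGroup.mk F := by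
                rw [FreeGroup.mul_mk]; rfl
              rw [hz', hx2, hx3]; group
            · rw [← hXsplit, List.rotate_append_length_eq]
              rfl
          · -- no cancellation: contradiction with y cyclically reduced
            exfalso
            set G : List (α × Bool) := z :: w with hGdef
            have hchainW : List.Chain' RW
                (FreeGroup.invRev G ++ ((u :: us) ++ G)) := by
              refine List.isChain_append.mpr
                ⟨chain_invRev hGc, List.isChain_append.mpr ⟨hXc, hGc, ?_⟩, ?_⟩
              · intro a ha b hb
                rw [Option.mem_def, hl] at ha
                injection ha with ha
                subst ha
                rw [Option.mem_def, List.head?_cons] at hb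
                injection hb with hb
                subst hb
                exact hz2
              · intro a ha b hb
                rw [Option.mem_def, List.cons_append, List.head?_cons] at hb
                injection hb with hb
                subst hb
                have hGa : a = (z.1, !z.2) := by
                  rw [Option.mem_def] at ha
                  have : (FreeGroup.invRev G).getLast? = some (z.1, !z.2) := by
                    simp [FreeGroup.invRev, hGdef]
                  rw [this] at ha
                  injection ha with ha
                  exact ha.symm
                subst hGa
                intro hq
                apply hz1
                rw [hq]
                simp
            obtain ⟨gl, hgl⟩ : ∃ gl, G.getLast? = some gl :=
              ⟨_, List.getLast?_eq_getLast (by rw [hGdef]; exact List.cons_ne_nil z w)⟩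
            have hD : G.dropLast ++ [gl] = G := List.dropLast_append_getLast? gl hgl
            have hgG : g = FreeGroup.mk G := by rw [← hG, FreeGroup.mk_toWord]
            have hyW : g⁻¹ * x * g =
                FreeGroup.mk (FreeGroup.invRev G ++ ((u :: us) ++ G)) := by
              rw [hgG, hxe, FreeGroup.inv_mk, FreeGroup.mul_mk, FreeGroup.mul_mk,
                List.append_assoc]
            have hyw : (g⁻¹ * x * g).toWord = FreeGroup.invRev G ++ ((u :: us) ++ G) := by
              rw [hyW, toWord_mk_chain hchainW]
            have hinvG : FreeGroup.invRev G = (gl.1, !gl.2) :: FreeGroup.invRev G.dropLast := by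
              conv_lhs => rw [← hD]
              simp [FreeGroup.invRev]
            have hhead : (g⁻¹ * x * g).toWord.head? = some (gl.1, !gl.2) := by
              rw [hyw, hinvG]
              rfl
            have hlast : (g⁻¹ * x * g).toWord.getLast? = some gl := by
              rw [hyw]
              conv_lhs => rw [← hD]
              rw [show FreeGroup.invRev (G.dropLast ++ [gl]) ++
                  ((u :: us) ++ (G.dropLast ++ [gl])) =
                  (FreeGroup.invRev (G.dropLast ++ [gl]) ++
                  ((u :: us) ++ G.dropLast)) ++ [gl] by simp]
              exact List.getLast?_concat
            exact hy _ gl hhead hlast rfl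

end Helpers

/-- In a free group, two cyclically reduced words are conjugate if and only if
one is a cyclic rotation of the other. -/
theorem conj_iff_cyclic_rotation {α : Type*} [DecidableEq α]
    (x y : FreeGroup α) (hx : CyclicallyReduced x) (hy : CyclicallyReduced y) :
    IsConj x y ↔ ∃ k : ℕ, y.toWord = x.toWord.rotate k := by
  constructor
  · intro h
    obtain ⟨c, hc⟩ := isConj_iff.mp h
    have hx' : (c⁻¹)⁻¹ * x * c⁻¹ = y := by rw [← hc]; group
    obtain ⟨k, hk⟩ := key (c⁻¹).toWord.length c⁻¹ x le_rfl hx (by rw [hx']; exact hy)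
    exact ⟨k, by rw [← hx', hk]⟩
  · rintro ⟨k, hk⟩
    rcases eq_or_ne x.toWord [] with hnil | hnil
    · rw [hnil, List.rotate_nil] at hk
      rw [FreeGroup.toWord_eq_nil_iff.mp hnil, FreeGroup.toWord_eq_nil_iff.mp hk]
    · set m := k % x.toWord.length with hm
      have hmle : m ≤ x.toWord.length :=
        le_of_lt (Nat.mod_lt _ (List.length_pos_iff.mpr hnil))
      set a := x.toWord.take m with hadef
      set b := x.toWord.drop m with hbdef
      have hsplit : x.toWord = a ++ b := (List.take_append_drop m _).symm
      have hrot : x.toWord.rotate k = b ++ a := by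
        rw [← List.rotate_mod, List.rotate_eq_drop_append_take hmle]
      rw [isConj_iff]
      refine ⟨(FreeGroup.mk a)⁻¹, ?_⟩
      have hxeq : x = FreeGroup.mk a * FreeGroup.mk b := by
        rw [FreeGroup.mul_mk, ← hsplit, FreeGroup.mk_toWord]
      have hyeq : y = FreeGroup.mk b * FreeGroup.mk a := by
        rw [FreeGroup.mul_mk, ← hrot, ← hk, FreeGroup.mk_toWord]
      rw [inv_inv, hxeq, hyeq]; group
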